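/- Let G be a finite group, H a normal subgroup, R an algebraically closed field of characteristic not dividing |G|, and V an irreducible R-representation of G. Then the restriction of V to H is semisimple, G permutes the H-isotypic components of V|_H transitively by conjugation, and in particular the number of isotypic components of V|_H divides the index [G:H]. -/

import Mathlib

section

variable {R G V : Type*} [Field R] [Group G] [AddCommGroup V] [Module R V]

/-- A submodule is `H`-invariant. -/
def IsHInvariant (H : Subgroup G) (ρ : Representation R G V) (W : Submodule R V) : Prop :=
  ∀ h ∈ H, ∀ v ∈ W, ρ h v ∈ W

/-- A submodule is an irreducible `H`-subrepresentation. -/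
def IsHSimple (H : Subgroup G) (ρ : Representation R G V) (W : Submodule R V) : Prop :=
  W ≠ ⊥ ∧ IsHInvariant H ρ W ∧
    ∀ W' ≤ W, IsHInvariant H ρ W' → W' = ⊥ ∨ W' = W

/-- Two `H`-subrepresentations are isomorphic: there is a linear endomorphism of `V` which is
`H`-equivariant and injective on `W₁` and maps `W₁` onto `W₂`. -/
def HIsoSub (H : Subgroup G) (ρ : Representation R G V) (W₁ W₂ : Submodule R V) : Prop :=
  ∃ f : V →ₗ[R] V, (∀ h ∈ H, ∀ v ∈ W₁, f (ρ h v) = ρ h (f v)) ∧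
    Set.InjOn f (W₁ : Set V) ∧ W₁.map f = W₂

/-- `W` is an `H`-isotypic component of `V`: the sum of all irreducible `H`-subrepresentations
isomorphic to a given one. -/
def IsIsotypicComponent (H : Subgroup G) (ρ : Representation R G V)
    (W : Submodule R V) : Prop :=
  ∃ S : Submodule R V, IsHSimple H ρ S ∧
    W = sSup {W' : Submodule R V | IsHSimple H ρ W' ∧ HIsoSub H ρ S W'}

namespace CliffordAux

variable (H : Subgroup G) (ρ : Representation R G V)

lemma rho_mul_apply (g g' : G) (v : V) : ρ (g * g') v = ρ g (ρ g' v) := by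
  rw [map_mul]; rfl

lemma rho_one_apply (v : V) : ρ 1 v = v := by rw [map_one]; rfl

lemma rho_inj (g : G) : Function.Injective (ρ g) := by
  intro a b hab
  have := congrArg (ρ g⁻¹) hab
  rwa [← rho_mul_apply, ← rho_mul_apply, inv_mul_cancel, rho_one_apply, rho_one_apply] at this

lemma map_map_rho (g g' : G) (W : Submodule R V) :
    (W.map (ρ g')).map (ρ g) = W.map (ρ (g * g')) := by
  rw [← Submodule.map_comp]
  congr 1
  ext v
  exact (rho_mul_apply ρ g g' v).symm

lemma map_rho_one (W : Submodule R V) : W.map (ρ 1) = W := by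
  have : ρ (1 : G) = LinearMap.id := by ext v; exact rho_one_apply ρ v
  rw [this, Submodule.map_id]

lemma map_rho_inv_map (g : G) (W : Submodule R V) : (W.map (ρ g)).map (ρ g⁻¹) = W := by
  rw [map_map_rho, inv_mul_cancel, map_rho_one]

variable {H ρ}

lemma inv_map_rho [H.Normal] {W : Submodule R V} (hW : IsHInvariant H ρ W) (g : G) :
    IsHInvariant H ρ (W.map (ρ g)) := by
  rintro h hh v ⟨w, hw, rfl⟩
  have hmem : g⁻¹ * h * g ∈ H := by
    have := Subgroup.Normal.conj_mem ‹H.Normal› h hh g⁻¹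
    simpa using this
  refine ⟨ρ (g⁻¹ * h * g) w, hW _ hmem w hw, ?_⟩
  rw [← rho_mul_apply, ← rho_mul_apply]
  congr 1
  group

lemma inv_map_rho_le {W : Submodule R V} (hW : IsHInvariant H ρ W) {h : G} (hh : h ∈ H) :
    W.map (ρ h) ≤ W :=
  Submodule.map_le_iff_le_comap.mpr (fun v hv => hW h hh v hv)

lemma inv_map_rho_self {W : Submodule R V} (hW : IsHInvariant H ρ W) {h : G}
    (hh : h ∈ H) : W.map (ρ h) = W := by
  refine le_antisymm (inv_map_rho_le hW hh) (fun v hv => ?_)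
  refine ⟨ρ h⁻¹ v, hW h⁻¹ (inv_mem hh) v hv, ?_⟩
  rw [← rho_mul_apply, mul_inv_cancel, rho_one_apply]

lemma simple_map_rho [H.Normal] {W : Submodule R V} (hW : IsHSimple H ρ W) (g : G) :
    IsHSimple H ρ (W.map (ρ g)) := by
  obtain ⟨hbot, hinv, hmin⟩ := hW
  refine ⟨?_, inv_map_rho hinv g, ?_⟩
  · intro h
    apply hbot
    have := congrArg (Submodule.map (ρ g⁻¹)) h
    rwa [map_rho_inv_map, Submodule.map_bot] at this
  · intro W' hle hinv'
    have hle' : W'.map (ρ g⁻¹) ≤ W := by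
      have := Submodule.map_mono (f := ρ g⁻¹) hle
      rwa [map_rho_inv_map] at this
    rcases hmin _ hle' (inv_map_rho hinv' g⁻¹) with h | h
    · left
      have := congrArg (Submodule.map (ρ g)) h
      rwa [map_map_rho, mul_inv_cancel, map_rho_one, Submodule.map_bot] at this
    · right
      have := congrArg (Submodule.map (ρ g)) h
      rwa [map_map_rho, mul_inv_cancel, map_rho_one] at this


lemma hiso_refl (W : Submodule R V) : HIsoSub H ρ W W :=
  ⟨LinearMap.id, fun _ _ _ _ => rfl, fun _ _ _ _ h => h, Submodule.map_id _⟩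

lemma hiso_trans {S W q : Submodule R V} (h₁ : HIsoSub H ρ S W) (h₂ : HIsoSub H ρ W q) :
    HIsoSub H ρ S q := by
  obtain ⟨f₁, e₁, i₁, m₁⟩ := h₁
  obtain ⟨f₂, e₂, i₂, m₂⟩ := h₂
  refine ⟨f₂ ∘ₗ f₁, ?_, ?_, ?_⟩
  · intro h hh v hv
    have hf₁v : f₁ v ∈ W := m₁ ▸ Submodule.mem_map_of_mem hv
    simp only [LinearMap.comp_apply]
    rw [e₁ h hh v hv, e₂ h hh _ hf₁v]
  · intro x hx y hy hxy
    have hx' : f₁ x ∈ W := m₁ ▸ Submodule.mem_map_of_mem hx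
    have hy' : f₁ y ∈ W := m₁ ▸ Submodule.mem_map_of_mem hy
    exact i₁ hx hy (i₂ hx' hy' hxy)
  · rw [Submodule.map_comp, m₁, m₂]

lemma hiso_symm {S₁ S₂ : Submodule R V} (h₁ : IsHInvariant H ρ S₁) (h₂ : IsHInvariant H ρ S₂)
    (hiso : HIsoSub H ρ S₁ S₂) : HIsoSub H ρ S₂ S₁ := by
  classical
  obtain ⟨f, hfe, hfi, hfm⟩ := hiso
  obtain ⟨Q, hQ⟩ := Submodule.exists_isCompl S₂
  set pr : V →ₗ[R] S₂ := S₂.linearProjOfIsCompl Q hQ with hpr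
  have hmapsto : ∀ x ∈ S₁, f x ∈ S₂ := fun x hx => hfm ▸ Submodule.mem_map_of_mem hx
  set f' : S₁ →ₗ[R] S₂ := f.restrict hmapsto with hf'
  have hf'app : ∀ x : S₁, (f' x : V) = f x := fun x => rfl
  have hbij : Function.Bijective f' := by
    constructor
    · intro x y hxy
      exact Subtype.ext (hfi x.2 y.2 (by rw [← hf'app, ← hf'app, hxy]))
    · intro y
      have : (y : V) ∈ S₁.map f := hfm.symm ▸ y.2
      obtain ⟨x, hx, hxy⟩ := this
      exact ⟨⟨x, hx⟩, Subtype.ext (by rw [hf'app]; exact hxy)⟩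
  set e := LinearEquiv.ofBijective f' hbij with he
  have heapp : ∀ x : S₁, (e x : V) = f x := fun x => rfl
  set g : V →ₗ[R] V := S₁.subtype ∘ₗ (e.symm : S₂ →ₗ[R] S₁) ∘ₗ pr with hg
  have hgval : ∀ v (hv : v ∈ S₂), g v = (e.symm ⟨v, hv⟩ : V) := by
    intro v hv
    simp only [hg, LinearMap.comp_apply]
    rw [hpr]; erw [Submodule.linearProjOfIsCompl_apply_left hQ ⟨v, hv⟩]
    rfl
  have hfg : ∀ v (hv : v ∈ S₂), f (g v) = v := by
    intro v hv
    rw [hgval v hv, ← heapp, e.apply_symm_apply]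
  have hgmem : ∀ v (hv : v ∈ S₂), g v ∈ S₁ := fun v hv => by
    rw [hgval v hv]; exact (e.symm ⟨v, hv⟩).2
  refine ⟨g, ?_, ?_, ?_⟩
  · intro h hh v hv
    have hv' : ρ h v ∈ S₂ := h₂ h hh v hv
    apply hfi (hgmem _ hv') (h₁ h hh _ (hgmem v hv))
    rw [hfg _ hv', hfe h hh _ (hgmem v hv), hfg v hv]
  · intro x hx y hy hxy
    have := congrArg f hxy
    rwa [hfg x hx, hfg y hy] at this
  · apply le_antisymm
    · rintro _ ⟨v, hv, rfl⟩
      exact hgmem v hv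
    · intro x hx
      have hfx : f x ∈ S₂ := hmapsto x hx
      refine ⟨f x, hfx, ?_⟩
      apply hfi (hgmem _ hfx) hx
      rw [hfg _ hfx]

variable (H ρ) in
/-- The isomorphism class of an `H`-simple submodule. -/
def isoClass (S : Submodule R V) : Set (Submodule R V) :=
  {W' : Submodule R V | IsHSimple H ρ W' ∧ HIsoSub H ρ S W'}

variable (H ρ) in
/-- The isotypic component attached to `S`. -/
def component (S : Submodule R V) : Submodule R V := sSup (isoClass H ρ S)

lemma isIsotypic_iff {W : Submodule R V} :
    IsIsotypicComponent H ρ W ↔ ∃ S, IsHSimple H ρ S ∧ W = component H ρ S := Iff.rfl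

lemma mem_isoClass_self {S : Submodule R V} (hS : IsHSimple H ρ S) : S ∈ isoClass H ρ S :=
  ⟨hS, hiso_refl S⟩

lemma le_component {S : Submodule R V} (hS : IsHSimple H ρ S) : S ≤ component H ρ S :=
  le_sSup (mem_isoClass_self hS)

lemma component_ne_bot {S : Submodule R V} (hS : IsHSimple H ρ S) :
    component H ρ S ≠ ⊥ := by
  intro h
  exact hS.1 (le_bot_iff.mp (h ▸ le_component hS))

lemma inv_sSup {T : Set (Submodule R V)} (hT : ∀ W ∈ T, IsHInvariant H ρ W) :
    IsHInvariant H ρ (sSup T) := by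
  intro h hh v hv
  have hle : (sSup T).map (ρ h) ≤ sSup T := by
    rw [Submodule.map_le_iff_le_comap]
    refine sSup_le fun W hW => ?_
    rw [← Submodule.map_le_iff_le_comap]
    exact le_trans (inv_map_rho_le (hT W hW) hh) (le_sSup hW)
  exact hle (Submodule.mem_map_of_mem hv)

lemma inv_component {S : Submodule R V} : IsHInvariant H ρ (component H ρ S) :=
  inv_sSup fun _ hW => hW.1.2.1

lemma component_congr {S₁ S₂ : Submodule R V} (h₁ : IsHSimple H ρ S₁) (h₂ : IsHSimple H ρ S₂)
    (hiso : HIsoSub H ρ S₁ S₂) : component H ρ S₁ = component H ρ S₂ := by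
  have hsymm : HIsoSub H ρ S₂ S₁ := hiso_symm h₁.2.1 h₂.2.1 hiso
  unfold component
  congr 1
  ext W
  exact ⟨fun ⟨hs, hi⟩ => ⟨hs, hiso_trans hsymm hi⟩, fun ⟨hs, hi⟩ => ⟨hs, hiso_trans hiso hi⟩⟩

lemma map_sSup' (f : V →ₗ[R] V) (T : Set (Submodule R V)) :
    (sSup T).map f = sSup ((fun W => W.map f) '' T) := by
  apply le_antisymm
  · rw [Submodule.map_le_iff_le_comap]
    exact sSup_le fun W hW => Submodule.map_le_iff_le_comap.mp (le_sSup ⟨W, hW, rfl⟩)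
  · refine sSup_le ?_
    rintro _ ⟨W, hW, rfl⟩
    exact Submodule.map_mono (le_sSup hW)

lemma hiso_map_rho [H.Normal] {S W : Submodule R V} (hiso : HIsoSub H ρ S W) (g : G) :
    HIsoSub H ρ (S.map (ρ g)) (W.map (ρ g)) := by
  obtain ⟨f, hfe, hfi, hfm⟩ := hiso
  refine ⟨ρ g ∘ₗ f ∘ₗ ρ g⁻¹, ?_, ?_, ?_⟩
  · rintro h hh _ ⟨u, hu, rfl⟩
    have hmem : g⁻¹ * h * g ∈ H := by
      have := Subgroup.Normal.conj_mem ‹H.Normal› h hh g⁻¹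
      simpa using this
    have hu' : (ρ g⁻¹) ((ρ g) u) = u := by
      rw [← rho_mul_apply, inv_mul_cancel, rho_one_apply]
    have key : (ρ g⁻¹) ((ρ h) ((ρ g) u)) = (ρ (g⁻¹ * h * g)) u := by
      rw [← rho_mul_apply, ← rho_mul_apply, mul_assoc]
    simp only [LinearMap.comp_apply]
    rw [key, hfe _ hmem u hu, hu', ← rho_mul_apply, ← rho_mul_apply]
    have : g * (g⁻¹ * h * g) = h * g := by group
    rw [this]
  · rintro _ ⟨u, hu, rfl⟩ _ ⟨w, hw, rfl⟩ hxy
    simp only [LinearMap.comp_apply] at hxy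
    rw [← rho_mul_apply, inv_mul_cancel, rho_one_apply, ← rho_mul_apply, inv_mul_cancel,
      rho_one_apply] at hxy
    exact congrArg (ρ g) (hfi hu hw (rho_inj ρ g hxy))
  · have : (S.map (ρ g)).map (ρ g ∘ₗ f ∘ₗ ρ g⁻¹) = ((S.map (f ∘ₗ (ρ g⁻¹ ∘ₗ ρ g)))).map (ρ g) := by
      rw [← Submodule.map_comp, ← Submodule.map_comp, LinearMap.comp_assoc,
        LinearMap.comp_assoc]
    rw [this]
    have hid : ρ (g : G)⁻¹ ∘ₗ ρ g = LinearMap.id := by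
      ext v
      simp only [LinearMap.comp_apply, LinearMap.id_apply]
      rw [← rho_mul_apply, inv_mul_cancel, rho_one_apply]
    rw [hid, LinearMap.comp_id, hfm]

lemma map_component [H.Normal] {S : Submodule R V} (g : G) :
    (component H ρ S).map (ρ g) = component H ρ (S.map (ρ g)) := by
  unfold component
  rw [map_sSup']
  congr 1
  ext W
  constructor
  · rintro ⟨W', ⟨hs, hi⟩, rfl⟩
    exact ⟨simple_map_rho hs g, hiso_map_rho hi g⟩
  · rintro ⟨hs, hi⟩
    refine ⟨W.map (ρ g⁻¹), ⟨?_, ?_⟩, ?_⟩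
    · exact simple_map_rho hs g⁻¹
    · have := hiso_map_rho hi g⁻¹
      rwa [map_rho_inv_map] at this
    · show (W.map (ρ g⁻¹)).map (ρ g) = W
      rw [map_map_rho, mul_inv_cancel, map_rho_one]


lemma exists_equivariant_proj [Fintype G] (hchar : (Fintype.card G : R) ≠ 0)
    {W : Submodule R V} (hW : IsHInvariant H ρ W) :
    ∃ π : V →ₗ[R] V, (∀ h ∈ H, ∀ v : V, π (ρ h v) = ρ h (π v)) ∧
      (∀ v, π v ∈ W) ∧ (∀ v ∈ W, π v = v) := by
  classical
  haveI : Fintype H := Fintype.ofFinite _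
  have hcardH : (Fintype.card H : R) ≠ 0 := by
    obtain ⟨k, hk⟩ := Subgroup.card_subgroup_dvd_card H
    intro h0
    apply hchar
    have hcards : Fintype.card G = Fintype.card H * k := by
      rw [← Nat.card_eq_fintype_card, ← Nat.card_eq_fintype_card]
      exact hk
    rw [hcards]
    push_cast
    rw [h0, zero_mul]
  obtain ⟨Q, hQ⟩ := Submodule.exists_isCompl W
  set pr0 : V →ₗ[R] V := W.subtype ∘ₗ W.linearProjOfIsCompl Q hQ with hpr0
  have hpr0W : ∀ v, pr0 v ∈ W := fun v => (W.linearProjOfIsCompl Q hQ v).2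
  have hpr0id : ∀ v ∈ W, pr0 v = v := by
    intro v hv
    show (W.subtype) (W.linearProjOfIsCompl Q hQ v) = v
    rw [show v = ((⟨v, hv⟩ : W) : V) from rfl]; erw [Submodule.linearProjOfIsCompl_apply_left hQ]
    rfl
  set c : R := (Fintype.card H : R)⁻¹ with hc
  set π : V →ₗ[R] V := c • ∑ h : H, ρ ((h : G))⁻¹ ∘ₗ pr0 ∘ₗ ρ (h : G) with hπ
  have happ : ∀ v, π v = c • ∑ h : H, ρ ((h : G))⁻¹ (pr0 (ρ (h : G) v)) := by
    intro v
    rw [hπ]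
    simp [LinearMap.sum_apply]
  have hπW : ∀ v, π v ∈ W := by
    intro v
    rw [happ]
    refine Submodule.smul_mem _ _ (Submodule.sum_mem _ fun h _ => ?_)
    exact hW _ (inv_mem h.2) _ (hpr0W _)
  have hπid : ∀ v ∈ W, π v = v := by
    intro v hv
    rw [happ]
    have hterm : ∀ h : H, ρ ((h : G))⁻¹ (pr0 (ρ (h : G) v)) = v := by
      intro h
      rw [hpr0id _ (hW _ h.2 v hv), ← rho_mul_apply, inv_mul_cancel, rho_one_apply]
    rw [Finset.sum_congr rfl fun h _ => hterm h, Finset.sum_const, Finset.card_univ]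
    rw [← Nat.cast_smul_eq_nsmul R, smul_smul, hc, inv_mul_cancel₀ hcardH, one_smul]
  refine ⟨π, ?_, hπW, hπid⟩
  intro h₀ hh₀ v
  set h₀' : H := ⟨h₀, hh₀⟩ with hh₀'
  rw [happ, happ, map_smul]
  congr 1
  rw [map_sum]
  refine Fintype.sum_bijective (· * h₀') (Group.mulRight_bijective h₀') _ _ ?_
  intro x
  have hcoe : ((x * h₀' : H) : G) = (x : G) * h₀ := rfl
  simp only [hcoe]
  rw [← rho_mul_apply (ρ := ρ) (x : G) h₀ v, ← rho_mul_apply (ρ := ρ) h₀ ((x : G) * h₀)⁻¹]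
  have hgrp : h₀ * ((x : G) * h₀)⁻¹ = (x : G)⁻¹ := by group
  rw [hgrp]

lemma maschke_compl [Fintype G] (hchar : (Fintype.card G : R) ≠ 0)
    {W : Submodule R V} (hW : IsHInvariant H ρ W) :
    ∃ W', IsHInvariant H ρ W' ∧ IsCompl W W' := by
  obtain ⟨π, he, hmem, hid⟩ := exists_equivariant_proj hchar hW
  refine ⟨LinearMap.ker π, ?_, ?_, ?_⟩
  · intro h hh v hv
    rw [LinearMap.mem_ker] at hv ⊢
    rw [he h hh v, hv, map_zero]
  · rw [Submodule.disjoint_def]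
    intro x hxW hxker
    rw [LinearMap.mem_ker] at hxker
    rw [← hid x hxW, hxker]
  · rw [codisjoint_iff, eq_top_iff]
    intro v _
    rw [Submodule.mem_sup]
    refine ⟨π v, hmem v, v - π v, ?_, by abel⟩
    rw [LinearMap.mem_ker, map_sub, hid (π v) (hmem v), sub_self]

lemma fd_of_irr [Fintype G] (hne : ∃ v : V, v ≠ 0)
    (hirr : ∀ W : Submodule R V, (∀ g : G, ∀ v ∈ W, ρ g v ∈ W) → W = ⊥ ∨ W = ⊤) :
    FiniteDimensional R V := by
  classical
  obtain ⟨v, hv⟩ := hne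
  set U : Submodule R V := Submodule.span R (Set.range fun g : G => ρ g v) with hU
  have hinv : ∀ g : G, ∀ x ∈ U, ρ g x ∈ U := by
    intro g x hx
    have hle : U.map (ρ g) ≤ U := by
      rw [hU, Submodule.map_span]
      apply Submodule.span_mono
      rintro _ ⟨_, ⟨g', rfl⟩, rfl⟩
      exact ⟨g * g', by simpa using (rho_mul_apply ρ g g' v).symm⟩
    exact hle (Submodule.mem_map_of_mem hx)
  have hvU : v ∈ U := Submodule.subset_span ⟨1, rho_one_apply ρ v⟩
  rcases hirr U hinv with h | h
  · exact absurd (by rwa [h, Submodule.mem_bot] at hvU) hv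
  · refine ⟨?_⟩
    rw [← h]
    exact Submodule.fg_span (Set.finite_range _)

lemma exists_simple_le [FiniteDimensional R V] :
    ∀ (n : ℕ) (W : Submodule R V), Module.finrank R W ≤ n → IsHInvariant H ρ W → W ≠ ⊥ →
      ∃ S, S ≤ W ∧ IsHSimple H ρ S := by
  intro n
  induction n with
  | zero =>
    intro W hn hinv hbot
    exact absurd (Submodule.finrank_eq_zero.mp (Nat.le_zero.mp hn)) hbot
  | succ n ih =>
    intro W hn hinv hbot
    by_cases hs : ∀ W' ≤ W, IsHInvariant H ρ W' → W' = ⊥ ∨ W' = W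
    · exact ⟨W, le_rfl, hbot, hinv, hs⟩
    · push_neg at hs
      obtain ⟨W', hle, hinv', hne', hneW⟩ := hs
      have hlt : Module.finrank R W' < Module.finrank R W :=
        Submodule.finrank_lt_finrank_of_lt (lt_of_le_of_ne hle hneW)
      obtain ⟨S, hS, hsimp⟩ := ih W' (by omega) hinv' hne'
      exact ⟨S, hS.trans hle, hsimp⟩

lemma hom_simple {π : V →ₗ[R] V} (hπe : ∀ h ∈ H, ∀ v : V, π (ρ h v) = ρ h (π v))
    {S₂ : Submodule R V} (hS₂ : IsHSimple H ρ S₂) (hπr : ∀ v, π v ∈ S₂)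
    {W : Submodule R V} (hWs : IsHSimple H ρ W) (hne : ∃ x ∈ W, π x ≠ 0) :
    HIsoSub H ρ W S₂ := by
  have hkinv : IsHInvariant H ρ (LinearMap.ker π ⊓ W) := by
    intro h hh u hu
    rw [Submodule.mem_inf] at hu ⊢
    refine ⟨?_, hWs.2.1 h hh u hu.2⟩
    rw [LinearMap.mem_ker, hπe h hh u, LinearMap.mem_ker.mp hu.1, map_zero]
  have hker : LinearMap.ker π ⊓ W = ⊥ := by
    rcases hWs.2.2 (LinearMap.ker π ⊓ W) inf_le_right hkinv with h | h
    · exact h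
    · exfalso
      obtain ⟨x, hxW, hx⟩ := hne
      have hmem : x ∈ LinearMap.ker π ⊓ W := h.symm ▸ hxW
      exact hx hmem.1
  have hmapinv : IsHInvariant H ρ (W.map π) := by
    rintro h hh _ ⟨w, hw, rfl⟩
    exact ⟨ρ h w, hWs.2.1 h hh w hw, hπe h hh w⟩
  have hmaple : W.map π ≤ S₂ := by
    rintro _ ⟨w, hw, rfl⟩
    exact hπr w
  refine ⟨π, fun h hh v _ => hπe h hh v, ?_, ?_⟩
  · intro x hx y hy hxy
    have hmem : x - y ∈ LinearMap.ker π ⊓ W :=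
      Submodule.mem_inf.mpr ⟨by rw [LinearMap.mem_ker, map_sub, hxy, sub_self],
        Submodule.sub_mem _ hx hy⟩
    rw [hker, Submodule.mem_bot] at hmem
    exact sub_eq_zero.mp hmem
  · rcases hS₂.2.2 (W.map π) hmaple hmapinv with h | h
    · exfalso
      obtain ⟨x, hxW, hx⟩ := hne
      have hmem := h ▸ Submodule.mem_map_of_mem (f := π) hxW
      rw [Submodule.mem_bot] at hmem
      exact hx hmem
    · exact h

lemma simple_le_component_iso [Fintype G] (hchar : (Fintype.card G : R) ≠ 0)
    {S q : Submodule R V} (hS : IsHSimple H ρ S) (hq : IsHSimple H ρ q)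
    (hle : q ≤ component H ρ S) : HIsoSub H ρ S q := by
  obtain ⟨π, hπe, hπr, hπid⟩ := exists_equivariant_proj hchar hq.2.1
  by_cases hall : ∀ W ∈ isoClass H ρ S, W ≤ LinearMap.ker π
  · exfalso
    have hck : component H ρ S ≤ LinearMap.ker π := sSup_le hall
    obtain ⟨x, hx, hx0⟩ := (Submodule.ne_bot_iff q).mp hq.1
    have hx1 : π x = 0 := LinearMap.mem_ker.mp (hck (hle hx))
    rw [hπid x hx] at hx1
    exact hx0 hx1
  · push_neg at hall
    obtain ⟨W, hWc, hWk⟩ := hall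
    obtain ⟨x, hxW, hx⟩ := SetLike.not_le_iff_exists.mp hWk
    have h6 : HIsoSub H ρ W q :=
      hom_simple hπe hq hπr hWc.1 ⟨x, hxW, fun h => hx (LinearMap.mem_ker.mpr h)⟩
    exact hiso_trans hWc.2 h6

lemma component_transitive [H.Normal] [Fintype G] (hchar : (Fintype.card G : R) ≠ 0)
    (hirr : ∀ W : Submodule R V, (∀ g : G, ∀ v ∈ W, ρ g v ∈ W) → W = ⊥ ∨ W = ⊤)
    {S₁ S₂ : Submodule R V} (h₁ : IsHSimple H ρ S₁) (h₂ : IsHSimple H ρ S₂) :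
    ∃ g : G, (component H ρ S₁).map (ρ g) = component H ρ S₂ := by
  obtain ⟨π, hπe, hπr, hπid⟩ := exists_equivariant_proj hchar h₂.2.1
  set T : Submodule R V := ⨆ g : G, (component H ρ S₁).map (ρ g) with hT
  have hTinv : ∀ g : G, ∀ v ∈ T, ρ g v ∈ T := by
    intro g v hv
    have hle : T.map (ρ g) ≤ T := by
      rw [hT, Submodule.map_iSup]
      refine iSup_le fun g' => ?_
      rw [map_map_rho]
      exact le_iSup (fun g'' => (component H ρ S₁).map (ρ g'')) (g * g')
    exact hle (Submodule.mem_map_of_mem hv)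
  have hTtop : T = ⊤ := by
    rcases hirr T hTinv with h | h
    · exfalso
      apply component_ne_bot h₁
      have hle : component H ρ S₁ ≤ T := by
        have h1 := le_iSup (fun g => (component H ρ S₁).map (ρ g)) 1
        rwa [map_rho_one] at h1
      exact le_bot_iff.mp (h ▸ hle)
    · exact h
  have hnotall : ¬ ∀ g : G, (component H ρ S₁).map (ρ g) ≤ LinearMap.ker π := by
    intro hall
    have hTk : T ≤ LinearMap.ker π := by rw [hT]; exact iSup_le hall
    obtain ⟨s, hs, hs0⟩ := (Submodule.ne_bot_iff S₂).mp h₂.1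
    have hsk : π s = 0 := LinearMap.mem_ker.mp (hTk (by rw [hTtop]; trivial))
    rw [hπid s hs] at hsk
    exact hs0 hsk
  push_neg at hnotall
  obtain ⟨g, hg⟩ := hnotall
  refine ⟨g, ?_⟩
  rw [map_component]
  rw [map_component] at hg
  have hnot2 : ¬ ∀ W ∈ isoClass H ρ (S₁.map (ρ g)), W ≤ LinearMap.ker π := by
    intro hall
    exact hg (sSup_le hall)
  push_neg at hnot2
  obtain ⟨W, hWc, hWk⟩ := hnot2
  obtain ⟨x, hxW, hx⟩ := SetLike.not_le_iff_exists.mp hWk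
  have h6 : HIsoSub H ρ W S₂ :=
    hom_simple hπe h₂ hπr hWc.1 ⟨x, hxW, fun h => hx (LinearMap.mem_ker.mpr h)⟩
  exact component_congr (simple_map_rho h₁ g) h₂ (hiso_trans hWc.2 h6)

end CliffordAux


open CliffordAux in
/-- Let `G` be finite, `H ⊴ G`, `char R ∤ |G|`, and `V` an irreducible `R`-representation of
`G`. Then `V|_H` is semisimple, `G` permutes the `H`-isotypic components of `V|_H`
transitively, and the number of isotypic components divides the index `[G:H]`. -/
theorem clifford_isotypic_components (H : Subgroup G) [H.Normal] [Fintype G]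
    (hchar : (Fintype.card G : R) ≠ 0)
    (ρ : Representation R G V)
    (hne : ∃ v : V, v ≠ 0)
    (hirr : ∀ W : Submodule R V, (∀ g : G, ∀ v ∈ W, ρ g v ∈ W) → W = ⊥ ∨ W = ⊤) :
    (∀ W : Submodule R V, IsHInvariant H ρ W →
      ∃ W' : Submodule R V, IsHInvariant H ρ W' ∧ IsCompl W W') ∧
    ∃ (n : ℕ) (C : Fin n → Submodule R V),
      Function.Injective C ∧
      (∀ i, IsIsotypicComponent H ρ (C i)) ∧
      (∀ W : Submodule R V, IsIsotypicComponent H ρ W → ∃ i, C i = W) ∧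
      (∀ i j : Fin n, ∃ g : G, (C i).map (ρ g) = C j) ∧
      n ∣ H.index := by
  classical
  haveI hfd : FiniteDimensional R V := fd_of_irr hne hirr
  refine ⟨fun W hW => maschke_compl hchar hW, ?_⟩
  have htopne : (⊤ : Submodule R V) ≠ ⊥ := by
    obtain ⟨v, hv⟩ := hne
    intro h
    apply hv
    have hvt : v ∈ (⊤ : Submodule R V) := Submodule.mem_top
    rw [h, Submodule.mem_bot] at hvt
    exact hvt
  obtain ⟨S₀, -, hS₀⟩ := exists_simple_le (H := H) (ρ := ρ)
    (Module.finrank R (⊤ : Submodule R V)) ⊤ le_rfl (fun _ _ _ _ => trivial) htopne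
  set C₀ : Submodule R V := component H ρ S₀ with hC₀
  have hC₀iso : IsIsotypicComponent H ρ C₀ := ⟨S₀, hS₀, rfl⟩
  letI hMA : MulAction G (Submodule R V) :=
    { smul := fun g W => W.map (ρ g)
      one_smul := fun W => map_rho_one ρ W
      mul_smul := fun g g' W => (map_map_rho ρ g g' W).symm }
  have htrans : ∀ W₁, IsIsotypicComponent H ρ W₁ → ∀ W₂, IsIsotypicComponent H ρ W₂ →
      ∃ g : G, W₁.map (ρ g) = W₂ := by
    rintro W₁ ⟨S₁, hS₁, rfl⟩ W₂ ⟨S₂, hS₂, rfl⟩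
    exact component_transitive hchar hirr hS₁ hS₂
  set 𝒞 : Set (Submodule R V) := {W : Submodule R V | IsIsotypicComponent H ρ W} with h𝒞
  have horbit : 𝒞 = MulAction.orbit G C₀ := by
    ext W
    constructor
    · intro hW
      obtain ⟨g, hg⟩ := htrans C₀ hC₀iso W hW
      exact MulAction.mem_orbit_iff.mpr ⟨g, hg⟩
    · rintro ⟨g, rfl⟩
      have hg : (g • C₀ : Submodule R V) = component H ρ (S₀.map (ρ g)) := by
        show C₀.map (ρ g) = component H ρ (S₀.map (ρ g))
        rw [hC₀, map_component]
      show IsIsotypicComponent H ρ (g • C₀)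
      rw [hg]
      exact ⟨S₀.map (ρ g), simple_map_rho hS₀ g, rfl⟩
  have hstab : H ≤ MulAction.stabilizer G C₀ := by
    intro h hh
    rw [MulAction.mem_stabilizer_iff]
    show C₀.map (ρ h) = C₀
    exact inv_map_rho_self (hC₀ ▸ inv_component (S := S₀)) hh
  have hfin : 𝒞.Finite := by
    rw [horbit]
    exact Set.finite_range _
  haveI hft : Fintype ↥𝒞 := hfin.fintype
  set e := Fintype.equivFin ↥𝒞 with he
  refine ⟨Fintype.card ↥𝒞, fun i => ((e.symm i : ↥𝒞) : Submodule R V), ?_, ?_, ?_, ?_, ?_⟩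
  · intro i j hij
    exact e.symm.injective (Subtype.ext hij)
  · intro i
    exact (e.symm i).2
  · intro W hW
    refine ⟨e ⟨W, hW⟩, ?_⟩
    show ((e.symm (e ⟨W, hW⟩) : ↥𝒞) : Submodule R V) = W
    rw [Equiv.symm_apply_apply]
  · intro i j
    exact htrans _ (e.symm i).2 _ (e.symm j).2
  · have hcard : Fintype.card ↥𝒞 = (MulAction.stabilizer G C₀).index := by
      rw [← Nat.card_eq_fintype_card, Nat.card_congr (Equiv.setCongr horbit),
        Nat.card_congr (MulAction.orbitEquivQuotientStabilizer G C₀)]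
      rfl
    rw [hcard]
    exact Subgroup.index_dvd_of_le hstab

end
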